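/- arXiv:1512.07641 — 3 statements merged into one kernel-verified Lean document; each statement's English description precedes it below -/
import Mathlib

section
/- Let (k_n) be a sequence of positive integers with k_n → ∞. For positive integers m, l, set E_{m,l} = {θ ∈ 𝕋 : ‖k_l θ‖_{ℝ/ℤ} < 1/(4m)}, where ‖·‖_{ℝ/ℤ} denotes distance to the nearest integer. Then the set E = ⋂_{m ≥ 1} ⋃_{N ≥ 1} ⋂_{l ≥ N} E_{m,l} has Lebesgue measure zero. -/
open MeasureTheory Filter

lemma smul_norm_lt_measure_le (n : ℕ) (hn : 0 < n) (δ : ℝ) :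
    volume {θ : AddCircle (1:ℝ) | ‖n • θ‖ < δ} ≤ ENNReal.ofReal (2 * δ) := by
  have hmp : MeasurePreserving (fun θ : AddCircle (1:ℝ) => (n : ℤ) • θ) volume volume :=
    MeasureTheory.Measure.measurePreserving_zsmul volume (by exact_mod_cast hn.ne')
  have hset : {θ : AddCircle (1:ℝ) | ‖n • θ‖ < δ}
      = (fun θ : AddCircle (1:ℝ) => (n : ℤ) • θ) ⁻¹' (Metric.ball 0 δ) := by
    ext θ
    simp [Metric.mem_ball, natCast_zsmul, dist_eq_norm]
  rw [hset, hmp.measure_preimage Metric.isOpen_ball.measurableSet.nullMeasurableSet]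
  calc volume (Metric.ball (0 : AddCircle (1:ℝ)) δ)
      ≤ volume (Metric.closedBall (0 : AddCircle (1:ℝ)) δ) :=
        measure_mono Metric.ball_subset_closedBall
    _ = ENNReal.ofReal (min 1 (2 * δ)) := AddCircle.volume_closedBall _ δ
    _ ≤ ENNReal.ofReal (2 * δ) := ENNReal.ofReal_le_ofReal (min_le_right _ _)

theorem badPhases_measure_zero (k : ℕ → ℕ) (hpos : ∀ n, 0 < k n)
    (htop : Tendsto k atTop atTop) :
    volume {θ : AddCircle (1:ℝ) |
        ∀ m : ℕ, 0 < m → ∃ N : ℕ, 0 < N ∧ ∀ l : ℕ, N ≤ l →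
          ‖(k l) • θ‖ < 1 / (4 * m)} = 0 := by
  set S : Set (AddCircle (1:ℝ)) := {θ : AddCircle (1:ℝ) |
        ∀ m : ℕ, 0 < m → ∃ N : ℕ, 0 < N ∧ ∀ l : ℕ, N ≤ l →
          ‖(k l) • θ‖ < 1 / (4 * m)} with hS
  -- main bound : for every m ≥ 1, volume S ≤ 1/(2m)
  have key : ∀ m : ℕ, 0 < m → volume S ≤ ENNReal.ofReal (1 / (2 * m)) := by
    intro m hm
    set A : ℕ → Set (AddCircle (1:ℝ)) :=
      fun N => {θ | ∀ l : ℕ, N ≤ l → ‖(k l) • θ‖ < 1 / (4 * m)} with hA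
    have hmono : Monotone A := by
      intro N M hNM θ hθ l hl
      exact hθ l (hNM.trans hl)
    have hsub : S ⊆ ⋃ N, A N := by
      intro θ hθ
      obtain ⟨N, -, hN⟩ := hθ m hm
      exact Set.mem_iUnion.2 ⟨N, hN⟩
    have hUnion : volume (⋃ N, A N) = ⨆ N, volume (A N) :=
      hmono.directed_le.measure_iUnion
    have hbound : ∀ N, volume (A N) ≤ ENNReal.ofReal (1 / (2 * m)) := by
      intro N
      have hsub' : A N ⊆ {θ : AddCircle (1:ℝ) | ‖(k N) • θ‖ < 1 / (4 * m)} :=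
        fun θ hθ => hθ N le_rfl
      calc volume (A N) ≤ volume {θ : AddCircle (1:ℝ) | ‖(k N) • θ‖ < 1 / (4 * m)} :=
            measure_mono hsub'
        _ ≤ ENNReal.ofReal (2 * (1 / (4 * m))) :=
            smul_norm_lt_measure_le (k N) (hpos N) _
        _ = ENNReal.ofReal (1 / (2 * m)) := by
            congr 1; field_simp; ring
    calc volume S ≤ volume (⋃ N, A N) := measure_mono hsub
      _ = ⨆ N, volume (A N) := hUnion
      _ ≤ ENNReal.ofReal (1 / (2 * m)) := iSup_le hbound
  -- conclude
  refine le_antisymm ?_ zero_le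
  have htend : Tendsto (fun m : ℕ => ENNReal.ofReal (1 / (2 * (m + 1 : ℕ)))) atTop (nhds 0) := by
    rw [show (0 : ENNReal) = ENNReal.ofReal 0 by simp]
    apply ENNReal.tendsto_ofReal
    have h1 : Tendsto (fun m : ℕ => (1 : ℝ) / ((m : ℝ) + 1)) atTop (nhds 0) :=
      tendsto_one_div_add_atTop_nhds_zero_nat
    have h2 := h1.const_mul (1 / 2 : ℝ)
    rw [mul_zero] at h2
    convert h2 using 2 with m
    push_cast
    field_simp
  refine ge_of_tendsto' htend (fun m => ?_)
  have := key (m + 1) (Nat.succ_pos m)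
  simpa using this
end

section
/- Suppose B : 𝕋 → M₂(ℂ) is measurable with ‖B(·)‖ ∈ L²(𝕋), det B(x) = d ≠ 0 for a.e. x, and D is a constant 2×2 unitary diagonal matrix. Define M_k(x) = B(x + kβ) D^k B(x)⁻¹ and Φ_k(x) = tr M_k(x) − tr(B(x) D^k B(x)⁻¹). Then ‖Φ_k‖²_{L¹(𝕋)} ≤ (4/|d|²) · ∫_𝕋 ‖B(x + kβ) − B(x)‖² dx · ∫_𝕋 ‖B(x)‖² dx. -/
open MeasureTheory

/-- The operator norm of a `2 × 2` complex matrix, induced by the Euclidean norm on `ℂ²`. -/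
noncomputable def opNorm2 (A : Matrix (Fin 2) (Fin 2) ℂ) : ℝ :=
  ‖Matrix.toEuclideanCLM (𝕜 := ℂ) A‖

noncomputable instance matMS : MeasurableSpace (Matrix (Fin 2) (Fin 2) ℂ) :=
  (inferInstance : MeasurableSpace (Fin 2 → Fin 2 → ℂ))

instance matBorel : BorelSpace (Matrix (Fin 2) (Fin 2) ℂ) :=
  (inferInstance : BorelSpace (Fin 2 → Fin 2 → ℂ))

lemma measurable_matrix {α : Type*} [MeasurableSpace α] {M : α → Matrix (Fin 2) (Fin 2) ℂ}
    (h : ∀ i j, Measurable fun x => M x i j) : Measurable M :=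
  measurable_pi_iff.mpr fun i => measurable_pi_iff.mpr fun j => h i j

lemma measurable_opNorm2 {α : Type*} [MeasurableSpace α] (M : α → Matrix (Fin 2) (Fin 2) ℂ)
    (h : Measurable M) : Measurable fun x => opNorm2 (M x) := by
  have hF : Continuous (fun A : Matrix (Fin 2) (Fin 2) ℂ => Matrix.toEuclideanCLM (𝕜 := ℂ) A) :=
    LinearMap.continuous_of_finiteDimensional
      ((Matrix.toEuclideanCLM (𝕜 := ℂ) (n := Fin 2)).toAlgEquiv.toLinearMap)
  exact (hF.norm.measurable).comp h

section OpNorm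

open scoped Matrix.Norms.L2Operator
open Matrix

lemma opNorm2_eq (A : Matrix (Fin 2) (Fin 2) ℂ) : opNorm2 A = ‖A‖ := rfl

lemma opNorm2_nonneg (A : Matrix (Fin 2) (Fin 2) ℂ) : 0 ≤ opNorm2 A := by
  rw [opNorm2_eq]; exact norm_nonneg _

lemma opNorm2_sub_le (A C : Matrix (Fin 2) (Fin 2) ℂ) :
    opNorm2 (A - C) ≤ opNorm2 A + opNorm2 C := by
  simp only [opNorm2_eq]; exact norm_sub_le _ _

lemma coord_le (v : EuclideanSpace ℂ (Fin 2)) (i : Fin 2) : ‖v i‖ ≤ ‖v‖ := by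
  rw [EuclideanSpace.norm_eq]
  calc ‖v i‖ = Real.sqrt (‖v i‖ ^ 2) := (Real.sqrt_sq (norm_nonneg _)).symm
  _ ≤ _ := by
      apply Real.sqrt_le_sqrt
      exact Finset.single_le_sum (f := fun j => ‖v j‖ ^ 2) (fun j _ => sq_nonneg _)
        (Finset.mem_univ i)

lemma entry_le (A : Matrix (Fin 2) (Fin 2) ℂ) (i j : Fin 2) : ‖A i j‖ ≤ ‖A‖ := by
  have h := A.l2_opNorm_mulVec (EuclideanSpace.single j 1)
  have hx : ‖(EuclideanSpace.single j (1:ℂ) : EuclideanSpace ℂ (Fin 2))‖ = 1 := by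
    simp [EuclideanSpace.norm_single]
  rw [hx, mul_one] at h
  refine le_trans ?_ h
  have h2 := coord_le ((EuclideanSpace.equiv (Fin 2) ℂ).symm <| A *ᵥ (EuclideanSpace.single j 1)) i
  refine le_trans (le_of_eq ?_) h2
  have : ((EuclideanSpace.equiv (Fin 2) ℂ).symm (A *ᵥ (EuclideanSpace.single j 1)) :
      EuclideanSpace ℂ (Fin 2)) i = A i j := by
    have : ((EuclideanSpace.equiv (Fin 2) ℂ).symm (A *ᵥ (EuclideanSpace.single j 1)) :
        EuclideanSpace ℂ (Fin 2)) i = (A *ᵥ (EuclideanSpace.single j 1 : EuclideanSpace ℂ (Fin 2))) i := rfl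
    rw [this]
    simp [Matrix.mulVec, dotProduct, EuclideanSpace.single_apply]
  rw [this]

lemma trace_le (A : Matrix (Fin 2) (Fin 2) ℂ) : ‖A.trace‖ ≤ 2 * ‖A‖ := by
  have : A.trace = A 0 0 + A 1 1 := by simp [Matrix.trace_fin_two]
  rw [this, two_mul]
  exact le_trans (norm_add_le _ _) (add_le_add (entry_le A 0 0) (entry_le A 1 1))

lemma norm_pow_unitary {U : Matrix (Fin 2) (Fin 2) ℂ} (hU : Uᴴ * U = 1) (k : ℕ) :
    ‖U ^ k‖ = 1 := by
  have hmem : U ∈ unitary (Matrix (Fin 2) (Fin 2) ℂ) := by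
    rw [Unitary.mem_iff]
    exact ⟨hU, mul_eq_one_comm.mp hU⟩
  have : U ^ k ∈ unitary (Matrix (Fin 2) (Fin 2) ℂ) := pow_mem hmem k
  exact CStarRing.norm_coe_unitary ⟨U ^ k, this⟩

lemma norm_transpose_le (A : Matrix (Fin 2) (Fin 2) ℂ) : ‖Aᵀ‖ ≤ ‖A‖ := by
  rw [Matrix.l2_opNorm_def]
  refine ContinuousLinearMap.opNorm_le_bound _ (norm_nonneg A) (fun x => ?_)
  set x' : Fin 2 → ℂ := WithLp.equiv 2 _ x with hx'
  set cx : EuclideanSpace ℂ (Fin 2) := (WithLp.equiv 2 _).symm (fun i => starRingEnd ℂ (x' i))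
    with hcxdef
  have hcx : ‖cx‖ = ‖x‖ := by
    rw [EuclideanSpace.norm_eq, EuclideanSpace.norm_eq]
    congr 1
    apply Finset.sum_congr rfl
    intro i _
    have : (cx i : ℂ) = starRingEnd ℂ (x i) := rfl
    rw [this]
    simp
  have h := Matrix.l2_opNorm_mulVec Aᴴ cx
  rw [Matrix.l2_opNorm_conjTranspose, hcx] at h
  refine le_trans (le_of_eq ?_) h
  rw [EuclideanSpace.norm_eq, EuclideanSpace.norm_eq]
  congr 1
  apply Finset.sum_congr rfl
  intro i _
  have h1 : (((Matrix.toEuclideanLin.trans LinearMap.toContinuousLinearMap) Aᵀ) x :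
      EuclideanSpace ℂ (Fin 2)) i = (Aᵀ *ᵥ x') i := rfl
  have h2 : ((EuclideanSpace.equiv (Fin 2) ℂ).symm (Aᴴ *ᵥ cx) : EuclideanSpace ℂ (Fin 2)) i
      = (Aᴴ *ᵥ (fun j => starRingEnd ℂ (x' j))) i := rfl
  rw [h1, h2]
  have key : (Aᵀ *ᵥ x') i = starRingEnd ℂ ((Aᴴ *ᵥ (fun j => starRingEnd ℂ (x' j))) i) := by
    simp [Matrix.mulVec, dotProduct, Matrix.conjTranspose_apply, Matrix.transpose_apply,
      map_sum]
  rw [key]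
  simp

lemma norm_adjugate_le (A : Matrix (Fin 2) (Fin 2) ℂ) : ‖A.adjugate‖ ≤ ‖A‖ := by
  classical
  set J : Matrix (Fin 2) (Fin 2) ℂ := !![0, -1; 1, 0] with hJ
  have hJu : Jᴴ * J = 1 := by
    ext i j
    fin_cases i <;> fin_cases j <;>
      simp [hJ, Matrix.mul_apply, Matrix.conjTranspose_apply, Fin.sum_univ_two]
  have hJu' : J * Jᴴ = 1 := mul_eq_one_comm.mp hJu
  have key : A.adjugate = J * Aᵀ * Jᴴ := by
    rw [Matrix.adjugate_fin_two]
    ext i j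
    fin_cases i <;> fin_cases j <;>
      simp [hJ, Matrix.mul_apply, Matrix.conjTranspose_apply, Fin.sum_univ_two,
        Matrix.vecMul, dotProduct, Matrix.transpose_apply]
  have hT : ‖Aᵀ‖ ≤ ‖A‖ := norm_transpose_le A
  have hJn : ‖J‖ = 1 := by simpa using norm_pow_unitary hJu 1
  have hJn' : ‖Jᴴ‖ = 1 := by rw [Matrix.l2_opNorm_conjTranspose]; exact hJn
  calc ‖A.adjugate‖ = ‖J * Aᵀ * Jᴴ‖ := by rw [key]
  _ ≤ ‖J * Aᵀ‖ * ‖Jᴴ‖ := Matrix.l2_opNorm_mul _ _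
  _ ≤ ‖J‖ * ‖Aᵀ‖ * ‖Jᴴ‖ := by
      apply mul_le_mul_of_nonneg_right (Matrix.l2_opNorm_mul _ _) (norm_nonneg _)
  _ = ‖Aᵀ‖ := by rw [hJn, hJn', one_mul, mul_one]
  _ ≤ ‖A‖ := hT

lemma key_pointwise (A C U : Matrix (Fin 2) (Fin 2) ℂ) (d : ℂ) (hd : d ≠ 0)
    (hC : C.det = d) (hU : ‖U‖ ≤ 1) :
    ‖(A * U * C⁻¹).trace - (C * U * C⁻¹).trace‖ ≤
      2 / ‖d‖ * (‖A - C‖ * ‖C‖) := by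
  have hinv : C⁻¹ = d⁻¹ • C.adjugate := by
    rw [Matrix.inv_def, hC, Ring.inverse_eq_inv']
  have htr : (A * U * C⁻¹).trace - (C * U * C⁻¹).trace
      = d⁻¹ * ((A - C) * U * C.adjugate).trace := by
    rw [← Matrix.trace_sub, ← Matrix.sub_mul, ← Matrix.sub_mul, hinv,
      Matrix.mul_smul, Matrix.trace_smul, smul_eq_mul]
  rw [htr, norm_mul, norm_inv]
  have h1 : ‖((A - C) * U * C.adjugate).trace‖ ≤ 2 * (‖A - C‖ * ‖C‖) := by
    refine le_trans (trace_le _) ?_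
    have h2 : ‖(A - C) * U * C.adjugate‖ ≤ ‖A - C‖ * ‖C‖ := by
      calc ‖(A - C) * U * C.adjugate‖ ≤ ‖(A - C) * U‖ * ‖C.adjugate‖ :=
            Matrix.l2_opNorm_mul _ _
      _ ≤ (‖A - C‖ * ‖U‖) * ‖C‖ :=
          mul_le_mul (Matrix.l2_opNorm_mul _ _) (norm_adjugate_le C) (norm_nonneg _)
            (by positivity)
      _ ≤ (‖A - C‖ * 1) * ‖C‖ := by
          have := mul_le_mul_of_nonneg_left hU (norm_nonneg (A - C))
          exact mul_le_mul_of_nonneg_right this (norm_nonneg _)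
      _ = ‖A - C‖ * ‖C‖ := by ring
    linarith
  have hda : 0 < ‖d‖ := norm_pos_iff.mpr hd
  have h2 : ‖d‖⁻¹ * ‖((A - C) * U * C.adjugate).trace‖
      ≤ ‖d‖⁻¹ * (2 * (‖A - C‖ * ‖C‖)) :=
    mul_le_mul_of_nonneg_left h1 (inv_nonneg.mpr hda.le)
  refine le_trans h2 (le_of_eq ?_)
  field_simp

lemma key_pointwise' (A C U : Matrix (Fin 2) (Fin 2) ℂ) (d : ℂ) (hd : d ≠ 0)
    (hC : C.det = d) (hU : opNorm2 U ≤ 1) :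
    ‖(A * U * C⁻¹).trace - (C * U * C⁻¹).trace‖ ≤
      2 / ‖d‖ * (opNorm2 (A - C) * opNorm2 C) := by
  simp only [opNorm2_eq] at hU ⊢
  exact key_pointwise A C U d hd hC hU

lemma opNorm2_pow_unitary {U : Matrix (Fin 2) (Fin 2) ℂ} (hU : Uᴴ * U = 1) (k : ℕ) :
    opNorm2 (U ^ k) ≤ 1 := by
  rw [opNorm2_eq]
  exact le_of_eq (norm_pow_unitary hU k)

end OpNorm

theorem trace_difference_L1_bound (β : ℝ)
    (B : AddCircle (1:ℝ) → Matrix (Fin 2) (Fin 2) ℂ)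
    (hBmeas : ∀ i j, Measurable fun x => B x i j)
    (hBL2 : MeasureTheory.MemLp (fun x => opNorm2 (B x)) 2 volume)
    (d : ℂ) (hd : d ≠ 0)
    (hdet : ∀ᵐ x ∂(volume : Measure (AddCircle (1:ℝ))), (B x).det = d)
    (D : Matrix (Fin 2) (Fin 2) ℂ) (hDu : D.conjTranspose * D = 1) (hDdiag : D.IsDiag)
    (k : ℕ) :
    (∫ x : AddCircle (1:ℝ),
        ‖
          (Matrix.trace (B (x + (((k : ℝ) * β : ℝ) : AddCircle (1:ℝ))) * D ^ k * (B x)⁻¹) -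
            Matrix.trace (B x * D ^ k * (B x)⁻¹))‖) ^ 2 ≤
      4 / ‖d‖ ^ 2 *
        (∫ x : AddCircle (1:ℝ),
          opNorm2 (B (x + (((k : ℝ) * β : ℝ) : AddCircle (1:ℝ))) - B x) ^ 2) *
        (∫ x : AddCircle (1:ℝ), opNorm2 (B x) ^ 2) := by
  classical
  set c : AddCircle (1:ℝ) := (((k : ℝ) * β : ℝ) : AddCircle (1:ℝ)) with hc
  set f : AddCircle (1:ℝ) → ℝ := fun x => opNorm2 (B (x + c) - B x) with hf
  set g : AddCircle (1:ℝ) → ℝ := fun x => opNorm2 (B x) with hg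
  have hBm : Measurable B := measurable_matrix hBmeas
  have hmp : MeasurePreserving (fun x : AddCircle (1:ℝ) => x + c) volume volume :=
    measurePreserving_add_right volume c
  have hBcm : Measurable fun x => B (x + c) := hBm.comp hmp.measurable
  have hgmem : MemLp g 2 volume := hBL2
  have hgcmem : MemLp (fun x => g (x + c)) 2 volume := hgmem.comp_measurePreserving hmp
  have hfmeas : Measurable f :=
    measurable_opNorm2 _ (measurable_matrix fun i j =>
      (((hBmeas i j).comp hmp.measurable)).sub (hBmeas i j))
  have hgmeas : Measurable g := measurable_opNorm2 _ hBm
  have hfmem : MemLp f 2 volume := by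
    refine MemLp.of_le (hgcmem.add hgmem) hfmeas.aestronglyMeasurable
      (Filter.Eventually.of_forall fun x => ?_)
    rw [Real.norm_of_nonneg (opNorm2_nonneg _)]
    refine le_trans (opNorm2_sub_le _ _) ?_
    exact le_abs_self _
  have hbound : ∀ᵐ x ∂(volume : Measure (AddCircle (1:ℝ))),
      ‖(B (x + c) * D ^ k * (B x)⁻¹).trace - (B x * D ^ k * (B x)⁻¹).trace‖
        ≤ 2 / ‖d‖ * (f x * g x) := by
    filter_upwards [hdet] with x hx
    exact key_pointwise' (B (x + c)) (B x) (D ^ k) d hd hx (opNorm2_pow_unitary hDu k)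
  have hIntfg : Integrable (fun x => f x * g x) volume := by
    have h1 : MemLp (g • f) 1 volume := by
      exact hfmem.smul hgmem
    have : (g • f) = fun x => f x * g x := by
      funext x; simp [Pi.smul_apply, smul_eq_mul, mul_comm]
    rw [this] at h1
    exact memLp_one_iff_integrable.mp h1
  have hInt : Integrable (fun x => 2 / ‖d‖ * (f x * g x)) volume :=
    hIntfg.const_mul _
  have step1 : (∫ x : AddCircle (1:ℝ),
      ‖(B (x + c) * D ^ k * (B x)⁻¹).trace - (B x * D ^ k * (B x)⁻¹).trace‖)
      ≤ ∫ x, 2 / ‖d‖ * (f x * g x) := by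
    refine integral_mono_of_nonneg (Filter.Eventually.of_forall fun x => ?_) hInt hbound
    exact norm_nonneg _
  have step2 : (∫ x : AddCircle (1:ℝ), 2 / ‖d‖ * (f x * g x))
      = 2 / ‖d‖ * ∫ x, f x * g x := integral_const_mul _ _
  have hfnn : ∀ x, 0 ≤ f x := fun x => opNorm2_nonneg _
  have hgnn : ∀ x, 0 ≤ g x := fun x => opNorm2_nonneg _
  have step3 : (∫ x, f x * g x)
      ≤ (∫ x, f x ^ (2:ℝ)) ^ ((1:ℝ)/2) * (∫ x, g x ^ (2:ℝ)) ^ ((1:ℝ)/2) := by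
    refine integral_mul_le_Lp_mul_Lq_of_nonneg ?_ (Filter.Eventually.of_forall hfnn)
      (Filter.Eventually.of_forall hgnn) ?_ ?_
    · constructor <;> norm_num
    · convert hfmem using 2
      norm_num
    · convert hgmem using 2
      norm_num
  have hrpow : ∀ h : AddCircle (1:ℝ) → ℝ, (∀ x, 0 ≤ h x) →
      (∫ x, h x ^ (2:ℝ)) = ∫ x, h x ^ 2 := by
    intro h hh
    apply integral_congr_ae
    refine Filter.Eventually.of_forall fun x => ?_
    show h x ^ (2:ℝ) = h x ^ 2
    rw [show (2:ℝ) = ((2:ℕ):ℝ) by norm_num, Real.rpow_natCast]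
  rw [hrpow f hfnn, hrpow g hgnn] at step3
  set F2 : ℝ := ∫ x, f x ^ 2 with hF2
  set G2 : ℝ := ∫ x, g x ^ 2 with hG2
  have hF2nn : 0 ≤ F2 := integral_nonneg fun x => sq_nonneg _
  have hG2nn : 0 ≤ G2 := integral_nonneg fun x => sq_nonneg _
  have hsq1 : (F2 ^ ((1:ℝ)/2)) ^ 2 = F2 := by
    rw [← Real.rpow_natCast (F2 ^ ((1:ℝ)/2)) 2, ← Real.rpow_mul hF2nn]
    norm_num
  have hsq2 : (G2 ^ ((1:ℝ)/2)) ^ 2 = G2 := by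
    rw [← Real.rpow_natCast (G2 ^ ((1:ℝ)/2)) 2, ← Real.rpow_mul hG2nn]
    norm_num
  have hInn : (0:ℝ) ≤ ∫ x : AddCircle (1:ℝ),
      ‖(B (x + c) * D ^ k * (B x)⁻¹).trace - (B x * D ^ k * (B x)⁻¹).trace‖ :=
    integral_nonneg fun x => norm_nonneg _
  have hda : 0 < ‖d‖ := norm_pos_iff.mpr hd
  have hchain : (∫ x : AddCircle (1:ℝ),
      ‖(B (x + c) * D ^ k * (B x)⁻¹).trace - (B x * D ^ k * (B x)⁻¹).trace‖)
      ≤ 2 / ‖d‖ * ((F2 ^ ((1:ℝ)/2)) * (G2 ^ ((1:ℝ)/2))) := by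
    refine le_trans step1 ?_
    rw [step2]
    exact mul_le_mul_of_nonneg_left step3 (by positivity)
  have hfinal := pow_le_pow_left₀ hInn hchain 2
  refine le_trans hfinal (le_of_eq ?_)
  have : (2 / ‖d‖ * (F2 ^ ((1:ℝ)/2) * G2 ^ ((1:ℝ)/2))) ^ 2
      = 4 / ‖d‖ ^ 2 * ((F2 ^ ((1:ℝ)/2)) ^ 2) * ((G2 ^ ((1:ℝ)/2)) ^ 2) := by
    field_simp
    ring
  rw [this, hsq1, hsq2, hF2, hG2]
end

section
/- Fix z ∈ ℂ with |z| = 1, β ∈ ℝ, and θ ∈ ℝ. For k a positive even integer, the function tr N_k^z(x), where N_k^z(x) = N^z(x + (k−1)β) ⋯ N^z(x + β) N^z(x) and N^z(x) = [[−2iz⁻¹, 2i sin(2πx)],[2i sin(2πx), −2iz]], is a trigonometric polynomial of degree at most k in x, and its Fourier coefficient c_k (the coefficient of e^{2πikx}) equals 2 e^{πik(k−1)β}. -/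
/-- The (renormalized) cocycle map of the unitary almost-Mathieu operator,
with complexified phase `w`. -/
noncomputable def Nmat (z : ℂ) (w : ℂ) : Matrix (Fin 2) (Fin 2) ℂ :=
  !![-2 * Complex.I * z⁻¹, 2 * Complex.I * Complex.sin (2 * Real.pi * w);
     2 * Complex.I * Complex.sin (2 * Real.pi * w), -2 * Complex.I * z]

open Finset

/-- `exp(2πit)` -/
noncomputable def Efn (t : ℂ) : ℂ := Complex.exp (2 * Real.pi * Complex.I * t)

def Smat : Matrix (Fin 2) (Fin 2) ℂ := !![0, 1; 1, 0]

noncomputable def Dmat (z : ℂ) : Matrix (Fin 2) (Fin 2) ℂ :=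
  !![-2 * Complex.I * z⁻¹, 0; 0, -2 * Complex.I * z]

lemma Efn_add (s t : ℂ) : Efn (s + t) = Efn s * Efn t := by
  simp only [Efn]; rw [← Complex.exp_add]; congr 1; ring

lemma Smat_sq : Smat * Smat = 1 := by
  simp [Smat, Matrix.mul_fin_two, Matrix.one_fin_two]

lemma Nmat_decomp (z w : ℂ) :
    Nmat z w = Dmat z + Efn w • Smat + (-Efn (-w)) • Smat := by
  unfold Nmat Dmat Smat Efn
  ext i j
  fin_cases i <;> fin_cases j <;>
    simp [Complex.sin, Complex.exp_neg] <;> ring_nf <;>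
    simp [Complex.exp_neg] <;> ring

lemma sum_shiftZ {M : Type*} [AddCommMonoid M] (a b d : ℤ) (f : ℤ → M) :
    ∑ j ∈ Icc a b, f j = ∑ i ∈ Icc (a - d) (b - d), f (i + d) := by
  have h : Icc a b = (Icc (a - d) (b - d)).map (addRightEmbedding d) := by
    rw [Finset.map_add_right_Icc]; congr 1 <;> ring
  rw [h, Finset.sum_map]; rfl

lemma key (z : ℂ) (β : ℝ) (m : ℕ) :
    ∃ C : ℤ → Matrix (Fin 2) (Fin 2) ℂ,
      (∀ j : ℤ, j ∉ Icc (-(m : ℤ)) (m : ℤ) → C j = 0) ∧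
      (∀ x : ℝ,
        ((List.range m).reverse.map (fun j => Nmat z ((x : ℂ) + (j : ℂ) * (β : ℂ)))).prod =
          ∑ j ∈ Icc (-(m : ℤ)) (m : ℤ), Efn ((j : ℂ) * (x : ℂ)) • C j) ∧
      C m = Efn ((∑ j ∈ range m, (j : ℂ)) * (β : ℂ)) • Smat ^ m := by
  induction m with
  | zero =>
      refine ⟨fun j => if j = 0 then 1 else 0, ?_, ?_, ?_⟩
      · intro j hj; simp at hj ⊢; omega
      · intro x; simp [Efn]
      · simp [Efn]
  | succ m ih =>
      obtain ⟨C, hsupp, hsum, htop⟩ := ih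
      set eb : ℂ := Efn ((m : ℂ) * (β : ℂ)) with heb
      set eb' : ℂ := -Efn (-((m : ℂ) * (β : ℂ))) with heb'
      refine ⟨fun j => Dmat z * C j + eb • (Smat * C (j - 1)) + eb' • (Smat * C (j + 1)),
        ?_, ?_, ?_⟩
      · intro j hj
        simp only [Finset.mem_Icc, not_and_or, not_le] at hj
        push_cast at hj
        have h1 : C (j - 1) = 0 := hsupp _ (by simp only [Finset.mem_Icc]; omega)
        have h2 : C j = 0 := hsupp _ (by simp only [Finset.mem_Icc]; omega)
        have h3 : C (j + 1) = 0 := hsupp _ (by simp only [Finset.mem_Icc]; omega)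
        simp [h1, h2, h3]
      · intro x
        have hstep :
            ((List.range (m + 1)).reverse.map
              (fun j => Nmat z ((x : ℂ) + (j : ℂ) * (β : ℂ)))).prod =
            Nmat z ((x : ℂ) + (m : ℂ) * (β : ℂ)) *
              ((List.range m).reverse.map
                (fun j => Nmat z ((x : ℂ) + (j : ℂ) * (β : ℂ)))).prod := by
          simp [List.range_succ]
        rw [hstep, hsum x, Nmat_decomp]
        -- per-term expansion of the left side
        have hterm : ∀ j : ℤ,
            (Dmat z + Efn ((x : ℂ) + (m : ℂ) * (β : ℂ)) • Smat +
              (-Efn (-((x : ℂ) + (m : ℂ) * (β : ℂ)))) • Smat) *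
              (Efn ((j : ℂ) * (x : ℂ)) • C j) =
            Efn ((j : ℂ) * (x : ℂ)) • (Dmat z * C j) +
              (Efn (((j : ℂ) + 1) * (x : ℂ)) * eb) • (Smat * C j) +
              (Efn (((j : ℂ) - 1) * (x : ℂ)) * eb') • (Smat * C j) := by
          intro j
          have e1 : Efn ((x : ℂ) + (m : ℂ) * (β : ℂ)) * Efn ((j : ℂ) * (x : ℂ)) =
              Efn (((j : ℂ) + 1) * (x : ℂ)) * eb := by
            rw [heb, ← Efn_add, ← Efn_add]; congr 1; ring
          have e2 : Efn (-((x : ℂ) + (m : ℂ) * (β : ℂ))) * Efn ((j : ℂ) * (x : ℂ)) =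
              Efn (((j : ℂ) - 1) * (x : ℂ)) * Efn (-((m : ℂ) * (β : ℂ))) := by
            rw [← Efn_add, ← Efn_add]; congr 1; ring
          rw [add_mul, add_mul, mul_smul_comm, smul_mul_assoc, smul_mul_assoc,
            mul_smul_comm, smul_smul, smul_smul, e1]
          congr 1
          rw [heb', mul_neg, ← e2, neg_mul]
        rw [Finset.mul_sum, Finset.sum_congr rfl (fun j _ => hterm j)]
        -- now handle the right side
        have hcast : ((m + 1 : ℕ) : ℤ) = (m : ℤ) + 1 := by push_cast; ring
        simp only [smul_add, hcast]
        rw [Finset.sum_add_distrib, Finset.sum_add_distrib]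
        -- D part
        have hsub1 : Icc (-(m : ℤ)) (m : ℤ) ⊆ Icc (-((m : ℤ) + 1)) ((m : ℤ) + 1) := by
          intro j hj; simp only [Finset.mem_Icc] at *; omega
        have hsub2 : Icc (-(m : ℤ)) (m : ℤ) ⊆ Icc (-((m : ℤ) + 1) - 1) ((m : ℤ) + 1 - 1) := by
          intro j hj; simp only [Finset.mem_Icc] at *; omega
        have hsub3 : Icc (-(m : ℤ)) (m : ℤ) ⊆ Icc (-((m : ℤ) + 1) - -1) ((m : ℤ) + 1 - -1) := by
          intro j hj; simp only [Finset.mem_Icc] at *; omega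
        have hD : ∑ j ∈ Icc (-((m : ℤ) + 1)) ((m : ℤ) + 1),
              Efn ((j : ℂ) * (x : ℂ)) • (Dmat z * C j) =
            ∑ j ∈ Icc (-(m : ℤ)) (m : ℤ), Efn ((j : ℂ) * (x : ℂ)) • (Dmat z * C j) := by
          refine (Finset.sum_subset hsub1 ?_).symm
          intro j _ hj
          rw [hsupp j hj]; simp
        -- up part
        have hU : ∑ j ∈ Icc (-((m : ℤ) + 1)) ((m : ℤ) + 1),
              Efn ((j : ℂ) * (x : ℂ)) • (eb • (Smat * C (j - 1))) =
            ∑ j ∈ Icc (-(m : ℤ)) (m : ℤ),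
              (Efn (((j : ℂ) + 1) * (x : ℂ)) * eb) • (Smat * C j) := by
          rw [sum_shiftZ _ _ 1]
          have : ∀ i : ℤ,
              Efn (((i + 1 : ℤ) : ℂ) * (x : ℂ)) • (eb • (Smat * C (i + 1 - 1))) =
              (Efn (((i : ℂ) + 1) * (x : ℂ)) * eb) • (Smat * C i) := by
            intro i
            rw [smul_smul]
            congr 2
            · push_cast; ring
            · ring
          rw [Finset.sum_congr rfl (fun i _ => this i)]
          refine (Finset.sum_subset hsub2 ?_).symm
          intro j _ hj
          rw [hsupp j hj]; simp
        -- down part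
        have hV : ∑ j ∈ Icc (-((m : ℤ) + 1)) ((m : ℤ) + 1),
              Efn ((j : ℂ) * (x : ℂ)) • (eb' • (Smat * C (j + 1))) =
            ∑ j ∈ Icc (-(m : ℤ)) (m : ℤ),
              (Efn (((j : ℂ) - 1) * (x : ℂ)) * eb') • (Smat * C j) := by
          rw [sum_shiftZ _ _ (-1)]
          have : ∀ i : ℤ,
              Efn (((i + -1 : ℤ) : ℂ) * (x : ℂ)) • (eb' • (Smat * C (i + -1 + 1))) =
              (Efn (((i : ℂ) - 1) * (x : ℂ)) * eb') • (Smat * C i) := by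
            intro i
            rw [smul_smul]
            congr 2
            · push_cast; ring
            · ring
          rw [Finset.sum_congr rfl (fun i _ => this i)]
          refine (Finset.sum_subset hsub3 ?_).symm
          intro j _ hj
          rw [hsupp j hj]; simp
        rw [Finset.sum_add_distrib, Finset.sum_add_distrib, hD, hU, hV]
      · have hcast : ((m + 1 : ℕ) : ℤ) = (m : ℤ) + 1 := by push_cast; ring
        have h1 : ((m : ℤ) + 1 : ℤ) - 1 = (m : ℤ) := by ring
        have h2 : C ((m : ℤ) + 1) = 0 := hsupp _ (by simp only [Finset.mem_Icc]; omega)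
        have h3 : C ((m : ℤ) + 1 + 1) = 0 := hsupp _ (by simp only [Finset.mem_Icc]; omega)
        simp only [hcast, h1, h2, h3, mul_zero, smul_zero, zero_add, add_zero]
        rw [htop, mul_smul_comm, smul_smul, Finset.sum_range_succ, add_mul, Efn_add, pow_succ']
        congr 1
        rw [heb]; ring

theorem trace_Nk_top_fourier_coefficient (z : ℂ) (hz : ‖z‖ = 1) (β : ℝ)
    (k : ℕ) (hk : 0 < k) (hke : Even k) :
    ∃ c : ℤ → ℂ,
      (∀ x : ℝ,
        Matrix.trace
            (((List.range k).reverse.map (fun j => Nmat z ((x : ℂ) + (j : ℂ) * (β : ℂ)))).prod) =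
          ∑ j ∈ Finset.Icc (-(k : ℤ)) (k : ℤ),
            c j * Complex.exp (2 * Real.pi * Complex.I * (j : ℂ) * (x : ℂ))) ∧
      c k = 2 * Complex.exp (Real.pi * Complex.I * (k : ℂ) * ((k : ℂ) - 1) * (β : ℂ)) := by
  obtain ⟨C, hsupp, hsum, htop⟩ := key z β k
  refine ⟨fun j => Matrix.trace (C j), ?_, ?_⟩
  · intro x
    rw [hsum x, Matrix.trace_sum]
    refine Finset.sum_congr rfl fun j _ => ?_
    simp only [Matrix.trace_smul, smul_eq_mul]
    rw [mul_comm]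
    congr 1
    simp only [Efn]
    congr 1
    ring
  · have hSk : Smat ^ k = 1 := by
      obtain ⟨n, hn⟩ := hke
      rw [hn, ← two_mul, pow_mul, pow_two, Smat_sq, one_pow]
    show Matrix.trace (C (k : ℤ)) = _
    rw [htop, Matrix.trace_smul, hSk, Matrix.trace_one, smul_eq_mul]
    have hcard : (Fintype.card (Fin 2) : ℂ) = 2 := by simp
    rw [hcard, mul_comm]
    congr 1
    have hs : (2 : ℂ) * (∑ j ∈ range k, (j : ℂ)) = (k : ℂ) * ((k : ℂ) - 1) := by
      have h := Finset.sum_range_id_mul_two k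
      have h2 : (((∑ i ∈ range k, i) * 2 : ℕ) : ℂ) = ((k * (k - 1) : ℕ) : ℂ) := by
        exact_mod_cast congrArg (Nat.cast : ℕ → ℂ) h
      push_cast [Nat.cast_sub (by omega : 1 ≤ k)] at h2
      linear_combination h2
    simp only [Efn]
    congr 1
    have : (∑ j ∈ range k, (j : ℂ)) * (β : ℂ) * 2 = (k : ℂ) * ((k : ℂ) - 1) * (β : ℂ) := by
      linear_combination (β : ℂ) * hs
    linear_combination (Real.pi : ℂ) * Complex.I * this
end
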